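/- arXiv:2406.15714 — 2 statements merged into one kernel-verified Lean document; each statement's English description precedes it below -/
import Mathlib

section
/- Let k ≥ 1, let v₁,…,v_k > 0 be real battle values, let n > 0, and define the proportional allocation p*_j = n · v_j / (∑_{j'=1}^k v_{j'}) for each j ∈ {1,…,k}. Then for every allocation x ∈ ℝ^k with x_j ≥ 0 for all j and ∑_{j=1}^k x_j = n, one has ∑_{j=1}^k v_j · x_j/(x_j + p*_j) ≤ (1/2)·∑_{j=1}^k v_j, i.e., the proportional allocation is a best response to itself under the Popular Vote winning rule with equal budgets. -/
lemma tangent_bound (x p : ℝ) (hx : 0 ≤ x) (hp : 0 < p) :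
    x / (x + p) ≤ 1 / 2 + (x - p) / (4 * p) := by
  have hxp : 0 < x + p := by linarith
  have h4p : 0 < 4 * p := by linarith
  rw [div_add_div _ _ (by norm_num : (2:ℝ) ≠ 0) (ne_of_gt h4p),
    div_le_div_iff₀ hxp (by positivity)]
  nlinarith [sq_nonneg (x - p)]

/-- Under the Popular Vote winning rule with equal budgets, the proportional
allocation is a best response to itself: any feasible allocation `x` against
the proportional allocation `p*` earns at most half the total value. -/
theorem proportional_allocation_best_response
    (k : ℕ) (hk : 1 ≤ k) (v : Fin k → ℝ) (hv : ∀ j, 0 < v j)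
    (n : ℝ) (hn : 0 < n)
    (pstar : Fin k → ℝ) (hpstar : ∀ j, pstar j = n * v j / ∑ j', v j')
    (x : Fin k → ℝ) (hx : ∀ j, 0 ≤ x j) (hxsum : ∑ j, x j = n) :
    ∑ j, v j * (x j / (x j + pstar j)) ≤ (1 / 2) * ∑ j, v j := by
  set V : ℝ := ∑ j', v j' with hV
  have hVpos : 0 < V := Finset.sum_pos (fun j _ => hv j) (by
    simpa [Finset.univ_nonempty_iff] using Fin.pos_iff_nonempty.mp hk)
  have hp : ∀ j, 0 < pstar j := fun j => by
    rw [hpstar j]; exact div_pos (mul_pos hn (hv j)) hVpos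
  have hpsum : ∑ j, pstar j = n := by
    simp only [hpstar]
    rw [← Finset.sum_div, ← Finset.mul_sum]
    field_simp
    exact hV.symm
  have key : ∀ j, v j * (x j / (x j + pstar j))
      ≤ v j / 2 + V / (4 * n) * (x j - pstar j) := by
    intro j
    have h1 := tangent_bound (x j) (pstar j) (hx j) (hp j)
    have h2 : v j * (x j / (x j + pstar j))
        ≤ v j * (1 / 2 + (x j - pstar j) / (4 * pstar j)) :=
      mul_le_mul_of_nonneg_left h1 (hv j).le
    have h3 : v j * (1 / 2 + (x j - pstar j) / (4 * pstar j))
        = v j / 2 + V / (4 * n) * (x j - pstar j) := by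
      rw [hpstar j]
      have hvj := (hv j).ne'
      field_simp
    linarith
  calc ∑ j, v j * (x j / (x j + pstar j))
      ≤ ∑ j, (v j / 2 + V / (4 * n) * (x j - pstar j)) :=
        Finset.sum_le_sum fun j _ => key j
    _ = (∑ j, v j) / 2 + V / (4 * n) * ((∑ j, x j) - ∑ j, pstar j) := by
        rw [Finset.sum_add_distrib, ← Finset.sum_div, ← Finset.mul_sum,
          Finset.sum_sub_distrib]
    _ = (1 / 2) * ∑ j, v j := by rw [hxsum, hpsum]; ring
end

section
/- Let k ≥ 1, let v₁,…,v_k > 0 be real battle values, let n > 0, and define the proportional allocation p*_j = n · v_j / (∑_{j'=1}^k v_{j'}). Then the pair (p*, p*) is a pure Nash equilibrium of the continuous Popular Vote Colonel Blotto game with equal budgets n: for every x ∈ ℝ^k with x ≥ 0 and ∑_j x_j = n and every y ∈ ℝ^k with y ≥ 0 and ∑_j y_j = n, ∑_{j=1}^k v_j · x_j/(x_j + p*_j) ≤ ∑_{j=1}^k v_j · p*_j/(p*_j + p*_j) ≤ ∑_{j=1}^k v_j · p*_j/(p*_j + y_j), and the equilibrium payoff of each player equals (1/2)·∑_{j=1}^k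 v_j. -/
/-- The pair `(p*, p*)` of proportional allocations is a pure Nash equilibrium
of the continuous Popular Vote Colonel Blotto game with equal budgets, with
equilibrium payoff half the total value. -/
theorem proportional_allocation_nash_equilibrium
    (k : ℕ) (hk : 1 ≤ k) (v : Fin k → ℝ) (hv : ∀ j, 0 < v j)
    (n : ℝ) (hn : 0 < n)
    (pstar : Fin k → ℝ) (hpstar : ∀ j, pstar j = n * v j / ∑ j', v j') :
    (∀ x : Fin k → ℝ, (∀ j, 0 ≤ x j) → ∑ j, x j = n →
        ∑ j, v j * (x j / (x j + pstar j)) ≤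
          ∑ j, v j * (pstar j / (pstar j + pstar j))) ∧
    (∀ y : Fin k → ℝ, (∀ j, 0 ≤ y j) → ∑ j, y j = n →
        ∑ j, v j * (pstar j / (pstar j + pstar j)) ≤
          ∑ j, v j * (pstar j / (pstar j + y j))) ∧
    ∑ j, v j * (pstar j / (pstar j + pstar j)) = (1 / 2) * ∑ j, v j := by
  have hVpos : 0 < ∑ j', v j' :=
    Finset.sum_pos (fun j _ => hv j) ⟨⟨0, hk⟩, Finset.mem_univ _⟩
  set V := ∑ j', v j' with hV
  have hp : ∀ j, 0 < pstar j := fun j => by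
    rw [hpstar j]; exact div_pos (mul_pos hn (hv j)) hVpos
  have hvp : ∀ j, v j / pstar j = V / n := fun j => by
    have h1 := (hv j).ne'
    have h2 := hn.ne'
    have h3 := hVpos.ne'
    rw [hpstar j]
    field_simp
  have hsump : ∑ j, pstar j = n := by
    have : ∀ j : Fin k, pstar j = n * v j / V := hpstar
    calc ∑ j, pstar j = ∑ j, n * v j / V := Finset.sum_congr rfl fun j _ => this j
      _ = (∑ j, n * v j) / V := by rw [Finset.sum_div]
      _ = n * V / V := by rw [← Finset.mul_sum]
      _ = n := by field_simp
  have hmid : ∑ j, v j * (pstar j / (pstar j + pstar j)) = (1 / 2) * V := by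
    have h1 : ∀ j : Fin k, v j * (pstar j / (pstar j + pstar j)) = v j / 2 := fun j => by
      have := hp j
      field_simp
      ring
    calc ∑ j, v j * (pstar j / (pstar j + pstar j)) = ∑ j, v j / 2 :=
        Finset.sum_congr rfl fun j _ => h1 j
      _ = V / 2 := by rw [← Finset.sum_div]
      _ = (1 / 2) * V := by ring
  refine ⟨?_, ?_, hmid⟩
  · intro x hx hxs
    have key : ∀ j : Fin k, v j * (x j / (x j + pstar j)) ≤
        v j / 2 + V / (4 * n) * (x j - pstar j) := by
      intro j
      have hpj := hp j
      have hxj := hx j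
      have hxp : 0 < x j + pstar j := by linarith
      have htan : x j / (x j + pstar j) ≤ 1 / 2 + (x j - pstar j) / (4 * pstar j) := by
        have hid : 1 / 2 + (x j - pstar j) / (4 * pstar j) - x j / (x j + pstar j)
            = (x j - pstar j) ^ 2 / (4 * pstar j * (x j + pstar j)) := by
          field_simp
          ring
        nlinarith [sq_nonneg (x j - pstar j), div_nonneg (sq_nonneg (x j - pstar j))
          (le_of_lt (by positivity : (0:ℝ) < 4 * pstar j * (x j + pstar j)))]
      have hvj := (hv j).le
      have h2 : v j * (x j / (x j + pstar j)) ≤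
          v j * (1 / 2 + (x j - pstar j) / (4 * pstar j)) :=
        mul_le_mul_of_nonneg_left htan hvj
      have h3 : v j * (1 / 2 + (x j - pstar j) / (4 * pstar j))
          = v j / 2 + V / (4 * n) * (x j - pstar j) := by
        have hd : V / (4 * n) = v j / (4 * pstar j) := by
          rw [show V / (4 * n) = V / n / 4 by ring, ← hvp j]; ring
        have hp0 := hpj.ne'
        rw [hd]
        field_simp
      linarith [h2, h3.le]
    calc ∑ j, v j * (x j / (x j + pstar j))
        ≤ ∑ j, (v j / 2 + V / (4 * n) * (x j - pstar j)) :=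
          Finset.sum_le_sum fun j _ => key j
      _ = V / 2 + V / (4 * n) * (∑ j, x j - ∑ j, pstar j) := by
          rw [Finset.sum_add_distrib, ← Finset.sum_div, ← Finset.mul_sum,
            Finset.sum_sub_distrib]
      _ = (1 / 2) * V := by rw [hxs, hsump]; ring
      _ = ∑ j, v j * (pstar j / (pstar j + pstar j)) := hmid.symm
  · intro y hy hys
    have key : ∀ j : Fin k, v j / 2 - V / (4 * n) * (y j - pstar j) ≤
        v j * (pstar j / (pstar j + y j)) := by
      intro j
      have hpj := hp j
      have hyj := hy j
      have hyp : 0 < pstar j + y j := by linarith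
      have htan : 1 / 2 - (y j - pstar j) / (4 * pstar j) ≤ pstar j / (pstar j + y j) := by
        have hid : pstar j / (pstar j + y j) - (1 / 2 - (y j - pstar j) / (4 * pstar j))
            = (y j - pstar j) ^ 2 / (4 * pstar j * (pstar j + y j)) := by
          field_simp
          ring
        nlinarith [div_nonneg (sq_nonneg (y j - pstar j))
          (le_of_lt (by positivity : (0:ℝ) < 4 * pstar j * (pstar j + y j)))]
      have hvj := (hv j).le
      have h2 : v j * (1 / 2 - (y j - pstar j) / (4 * pstar j)) ≤
          v j * (pstar j / (pstar j + y j)) :=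
        mul_le_mul_of_nonneg_left htan hvj
      have h3 : v j * (1 / 2 - (y j - pstar j) / (4 * pstar j))
          = v j / 2 - V / (4 * n) * (y j - pstar j) := by
        have hd : V / (4 * n) = v j / (4 * pstar j) := by
          rw [show V / (4 * n) = V / n / 4 by ring, ← hvp j]; ring
        have hp0 := hpj.ne'
        rw [hd]
        field_simp
      linarith [h2, h3.le]
    calc ∑ j, v j * (pstar j / (pstar j + pstar j)) = (1 / 2) * V := hmid
      _ = V / 2 - V / (4 * n) * (∑ j, y j - ∑ j, pstar j) := by rw [hys, hsump]; ring
      _ = ∑ j, (v j / 2 - V / (4 * n) * (y j - pstar j)) := by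
          rw [Finset.sum_sub_distrib, ← Finset.sum_div, ← Finset.mul_sum,
            Finset.sum_sub_distrib]
      _ ≤ ∑ j, v j * (pstar j / (pstar j + y j)) :=
          Finset.sum_le_sum fun j _ => key j
end
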